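/- Let G = (V, E) be a finite simple graph in which every vertex is incident to at least one edge, and let α(G) be the maximum cardinality of an independent set. In the ring R = ℤ[z_e : e ∈ E]/(z_e²), the smallest integer k such that every product of k vertex monomials Z_{v_1} ⋯ Z_{v_k} (repetitions allowed) equals zero is k = α(G) + 1. -/

import Mathlib

open scoped Classical

/-- The quotient of the polynomial ring `ℤ[z_e : e ∈ E]` by the ideal generated
by the squares of all edge variables. -/
noncomputable def NilEdgeRing {V : Type*} [Fintype V] [DecidableEq V]
    (G : SimpleGraph V) [DecidableRel G.Adj] : Type _ :=
  MvPolynomial G.edgeSet ℤ ⧸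
    Ideal.span (Set.range fun e : G.edgeSet =>
      (MvPolynomial.X e : MvPolynomial G.edgeSet ℤ) ^ 2)

noncomputable instance {V : Type*} [Fintype V] [DecidableEq V]
    (G : SimpleGraph V) [DecidableRel G.Adj] : CommRing (NilEdgeRing G) :=
  Ideal.Quotient.commRing _

/-- The vertex monomial `Z_v = ∏_{e ∈ E(v)} z_e` in the nilpotent edge ring. -/
noncomputable def vertexMonomial {V : Type*} [Fintype V] [DecidableEq V]
    (G : SimpleGraph V) [DecidableRel G.Adj] (v : V) : NilEdgeRing G :=
  Ideal.Quotient.mk _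
    (∏ e : G.edgeSet, if v ∈ (e : Sym2 V) then MvPolynomial.X e else 1)

section Aux

variable {V : Type*} [Fintype V] [DecidableEq V] (G : SimpleGraph V) [DecidableRel G.Adj]

local notation "I" => Ideal.span (Set.range fun e : G.edgeSet =>
      (MvPolynomial.X e : MvPolynomial G.edgeSet ℤ) ^ 2)

/-- Squarefree coefficients of elements of the ideal vanish. -/
lemma coeff_eq_zero_of_mem {p : MvPolynomial G.edgeSet ℤ} (hp : p ∈ I)
    {d : G.edgeSet →₀ ℕ} (hd : ∀ e, d e ≤ 1) : MvPolynomial.coeff d p = 0 := by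
  induction hp using Submodule.span_induction generalizing d with
  | mem x hx =>
    obtain ⟨e, rfl⟩ := hx
    rw [MvPolynomial.coeff_X_pow]
    rw [if_neg]
    intro h
    have := hd e
    rw [← h, Finsupp.single_eq_same] at this
    omega
  | zero => simp
  | add x y _ _ hx hy => simp [hx hd, hy hd]
  | smul r x _ hx =>
    rw [smul_eq_mul, MvPolynomial.coeff_mul]
    refine Finset.sum_eq_zero fun q hq => ?_
    rw [Finset.HasAntidiagonal.mem_antidiagonal] at hq
    have : ∀ e, q.2 e ≤ 1 := fun e => by
      have := hd e; have : q.1 e + q.2 e = d e := by rw [← hq]; rfl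
      omega
    rw [hx this, mul_zero]

lemma vm_mul_eq_zero {u w : V} (e0 : G.edgeSet) (hu : u ∈ (e0 : Sym2 V))
    (hw : w ∈ (e0 : Sym2 V)) : vertexMonomial G u * vertexMonomial G w = 0 := by
  unfold vertexMonomial
  have main : (Ideal.Quotient.mk I
        (∏ e : G.edgeSet, if u ∈ (e : Sym2 V) then (MvPolynomial.X e : MvPolynomial G.edgeSet ℤ) else 1) :
        MvPolynomial G.edgeSet ℤ ⧸ I) *
      Ideal.Quotient.mk I
        (∏ e : G.edgeSet, if w ∈ (e : Sym2 V) then MvPolynomial.X e else 1) = 0 := by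
    rw [← map_mul, Ideal.Quotient.eq_zero_iff_mem]
    have h1 : (∏ e : G.edgeSet, if u ∈ (e : Sym2 V) then (MvPolynomial.X e : MvPolynomial G.edgeSet ℤ) else 1)
        = MvPolynomial.X e0 * ∏ e ∈ Finset.univ.erase e0,
            (if u ∈ (e : Sym2 V) then MvPolynomial.X e else 1) := by
      rw [← Finset.mul_prod_erase _ _ (Finset.mem_univ e0), if_pos hu]
    have h2 : (∏ e : G.edgeSet, if w ∈ (e : Sym2 V) then (MvPolynomial.X e : MvPolynomial G.edgeSet ℤ) else 1)
        = MvPolynomial.X e0 * ∏ e ∈ Finset.univ.erase e0,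
            (if w ∈ (e : Sym2 V) then MvPolynomial.X e else 1) := by
      rw [← Finset.mul_prod_erase _ _ (Finset.mem_univ e0), if_pos hw]
    rw [h1, h2]
    have hsq : (MvPolynomial.X e0 : MvPolynomial G.edgeSet ℤ) ^ 2 ∈ I :=
      Ideal.subset_span ⟨e0, rfl⟩
    have key := Ideal.mul_mem_right
      ((∏ e ∈ Finset.univ.erase e0, (if u ∈ (e : Sym2 V) then (MvPolynomial.X e : MvPolynomial G.edgeSet ℤ) else 1)) *
       (∏ e ∈ Finset.univ.erase e0, (if w ∈ (e : Sym2 V) then MvPolynomial.X e else 1))) _ hsq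
    convert key using 1
    ring
  exact main

/-- Product over an independent set is nonzero. -/
lemma prod_vm_ne_zero {S : Finset V}
    (hS : (S : Set V).Pairwise fun u v => ¬ G.Adj u v) :
    ∏ v ∈ S, vertexMonomial G v ≠ 0 := by
  classical
  set c : G.edgeSet → ℕ := fun e => (S.filter (fun v => v ∈ (e : Sym2 V))).card with hc
  have hc1 : ∀ e, c e ≤ 1 := by
    intro e
    rw [hc]
    apply Finset.card_le_one.mpr
    intro x hx y hy
    rw [Finset.mem_filter] at hx hy
    by_contra hxy
    have he : (e : Sym2 V) = s(x, y) := (Sym2.mem_and_mem_iff hxy).mp ⟨hx.2, hy.2⟩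
    have : G.Adj x y := by
      have := e.2
      rw [he, SimpleGraph.mem_edgeSet] at this
      exact this
    exact hS hx.1 hy.1 hxy this
  set d : G.edgeSet →₀ ℕ := Finsupp.equivFunOnFinite.symm c with hdc
  have hd : ∀ e, d e = c e := fun e => rfl
  have hprod : (∏ v ∈ S, ∏ e : G.edgeSet,
      (if v ∈ (e : Sym2 V) then (MvPolynomial.X e : MvPolynomial G.edgeSet ℤ) else 1))
      = MvPolynomial.monomial d 1 := by
    rw [Finset.prod_comm]
    have step1 : ∀ e : G.edgeSet, (∏ v ∈ S,
        (if v ∈ (e : Sym2 V) then (MvPolynomial.X e : MvPolynomial G.edgeSet ℤ) else 1))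
        = MvPolynomial.X e ^ d e := by
      intro e
      rw [Finset.prod_ite, Finset.prod_const, Finset.prod_const_one, mul_one, hd]
    rw [Finset.prod_congr rfl fun e _ => step1 e]
    rw [← MvPolynomial.prod_X_pow_eq_monomial]
    symm
    apply Finset.prod_subset (Finset.subset_univ _)
    intro e _ he
    rw [Finsupp.notMem_support_iff] at he
    rw [he, pow_zero]
  intro h0
  have h0' : (Ideal.Quotient.mk I (∏ v ∈ S, ∏ e : G.edgeSet,
      (if v ∈ (e : Sym2 V) then (MvPolynomial.X e : MvPolynomial G.edgeSet ℤ) else 1)) :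
      MvPolynomial G.edgeSet ℤ ⧸ I) = 0 := by
    rw [map_prod]
    exact h0
  have hmem : (∏ v ∈ S, ∏ e : G.edgeSet,
      (if v ∈ (e : Sym2 V) then (MvPolynomial.X e : MvPolynomial G.edgeSet ℤ) else 1)) ∈ I := by
    rwa [← Ideal.Quotient.eq_zero_iff_mem]
  have := coeff_eq_zero_of_mem G hmem (fun e => by rw [hd]; exact hc1 e)
  rw [hprod, MvPolynomial.coeff_monomial, if_pos rfl] at this
  exact one_ne_zero this

end Aux

theorem stmt_6 {V : Type*} [Fintype V] [DecidableEq V] (G : SimpleGraph V)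
    [DecidableRel G.Adj] (hiso : ∀ v : V, ∃ u : V, G.Adj v u) (a : ℕ)
    (ha : IsGreatest {k | ∃ S : Finset V, S.card = k ∧
        (S : Set V).Pairwise fun u v => ¬ G.Adj u v} a) :
    IsLeast {k | ∀ f : Fin k → V, (∏ i, vertexMonomial G (f i)) = 0}
      (a + 1) := by
  constructor
  · -- every product of a+1 monomials vanishes
    intro f
    -- find i ≠ j and an edge containing both f i and f j
    have key : ∃ i j : Fin (a + 1), i ≠ j ∧ ∃ e0 : G.edgeSet,
        f i ∈ (e0 : Sym2 V) ∧ f j ∈ (e0 : Sym2 V) := by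
      by_cases hinj : Function.Injective f
      · -- image is too big to be independent
        have hcard : (Finset.univ.image f).card = a + 1 := by
          rw [Finset.card_image_of_injective _ hinj, Finset.card_univ, Fintype.card_fin]
        have hnotind : ¬ ((Finset.univ.image f : Finset V) : Set V).Pairwise
            fun u v => ¬ G.Adj u v := by
          intro hind
          have : a + 1 ∈ {k | ∃ S : Finset V, S.card = k ∧
              (S : Set V).Pairwise fun u v => ¬ G.Adj u v} :=
            ⟨Finset.univ.image f, hcard, hind⟩
          have := ha.2 this
          omega
        rw [Set.Pairwise] at hnotind
        push_neg at hnotind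
        obtain ⟨u, hu, v, hv, huv, hadj⟩ := hnotind
        rw [Finset.mem_coe, Finset.mem_image] at hu hv
        obtain ⟨i, _, rfl⟩ := hu
        obtain ⟨j, _, rfl⟩ := hv
        refine ⟨i, j, fun h => huv (by rw [h]), ⟨s(f i, f j), hadj⟩, ?_, ?_⟩
        · exact Sym2.mem_mk_left _ _
        · exact Sym2.mem_mk_right _ _
      · rw [Function.not_injective_iff] at hinj
        obtain ⟨i, j, hfij, hij⟩ := hinj
        obtain ⟨u, hadj⟩ := hiso (f i)
        refine ⟨i, j, hij, ⟨s(f i, u), hadj⟩, Sym2.mem_mk_left _ _, ?_⟩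
        show f j ∈ s(f i, u)
        rw [hfij]
        exact Sym2.mem_mk_left _ _
    obtain ⟨i, j, hij, e0, hi, hj⟩ := key
    have hz : vertexMonomial G (f i) * vertexMonomial G (f j) = 0 :=
      vm_mul_eq_zero G e0 hi hj
    rw [← Finset.mul_prod_erase _ _ (Finset.mem_univ i),
      ← Finset.mul_prod_erase _ _ (Finset.mem_erase.mpr ⟨hij.symm, Finset.mem_univ j⟩),
      ← mul_assoc, hz, zero_mul]
  · -- lower bound
    intro k hk
    by_contra hlt
    push_neg at hlt
    have hka : k ≤ a := by omega
    obtain ⟨S, hScard, hSind⟩ := ha.1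
    obtain ⟨T, hTS, hTcard⟩ := Finset.exists_subset_card_eq (s := S) (n := k) (by omega)
    have hTind : (T : Set V).Pairwise fun u v => ¬ G.Adj u v :=
      hSind.mono (Finset.coe_subset.mpr hTS)
    have hne := prod_vm_ne_zero G hTind
    apply hne
    subst hTcard
    have := hk (fun i => (T.equivFin.symm i : V))
    calc ∏ v ∈ T, vertexMonomial G v
        = ∏ x : T, vertexMonomial G (x : V) := (Finset.prod_coe_sort T _).symm
      _ = ∏ i : Fin T.card, vertexMonomial G ((T.equivFin.symm i : T) : V) :=
          (Equiv.prod_comp T.equivFin.symm _).symm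
      _ = 0 := this
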